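/- Let (Ω, ℱ, ℙ) be a probability space, c ≥ 0, δ ≥ 0, and A₁, A₂ real random variables with 0 ≤ A₁ ≤ A₂ ≤ c almost surely and A₂ − A₁ ≤ δ almost surely. Setting q_i := e^{−A_i}/𝔼[e^{−A_i}] for i = 1, 2, one has 𝔼[|q₂ − q₁|] ≤ 2 e^{2c} δ. -/
import Mathlib


open MeasureTheory

private lemma exp_sub_exp_le {a b : ℝ} (ha : 0 ≤ a) (hab : a ≤ b) :
    Real.exp (-a) - Real.exp (-b) ≤ b - a := by
  have h1 := Real.add_one_le_exp (a - b)
  have h2 : Real.exp (-a) * Real.exp (a - b) = Real.exp (-b) := by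
    rw [← Real.exp_add]; ring_nf
  have h3 : Real.exp (-a) ≤ 1 := Real.exp_le_one_iff.2 (by linarith)
  nlinarith [Real.exp_pos (-a)]

/-- if `0 ≤ A₁ ≤ A₂ ≤ c` a.s. and `A₂ − A₁ ≤ δ` a.s., then the normalized
weights `q_i = e^{-A_i}/𝔼[e^{-A_i}]` satisfy `𝔼[|q₂ − q₁|] ≤ 2 e^{2c} δ`. -/
theorem weight_ratio_increment_bound
    {Ω : Type*} [MeasurableSpace Ω] (ℙ : Measure Ω) [IsProbabilityMeasure ℙ]
    (c δ : ℝ) (hc : 0 ≤ c) (hδ : 0 ≤ δ)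
    (A₁ A₂ : Ω → ℝ) (hA₁ : Measurable A₁) (hA₂ : Measurable A₂)
    (hbound : ∀ᵐ ω ∂ℙ, 0 ≤ A₁ ω ∧ A₁ ω ≤ A₂ ω ∧ A₂ ω ≤ c)
    (hδbound : ∀ᵐ ω ∂ℙ, A₂ ω - A₁ ω ≤ δ) :
    (∫ ω, |Real.exp (-(A₂ ω)) / (∫ ω', Real.exp (-(A₂ ω')) ∂ℙ)
          - Real.exp (-(A₁ ω)) / (∫ ω', Real.exp (-(A₁ ω')) ∂ℙ)| ∂ℙ)
      ≤ 2 * Real.exp (2 * c) * δ := by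
  have hm₁ : Measurable fun ω => Real.exp (-(A₁ ω)) := hA₁.neg.exp
  have hm₂ : Measurable fun ω => Real.exp (-(A₂ ω)) := hA₂.neg.exp
  have hi₁ : Integrable (fun ω => Real.exp (-(A₁ ω))) ℙ := by
    refine (integrable_const (1 : ℝ)).mono' hm₁.aestronglyMeasurable ?_
    filter_upwards [hbound] with ω h
    rw [Real.norm_eq_abs, abs_of_pos (Real.exp_pos _)]
    exact Real.exp_le_one_iff.2 (by linarith [h.1])
  have hi₂ : Integrable (fun ω => Real.exp (-(A₂ ω))) ℙ := by
    refine (integrable_const (1 : ℝ)).mono' hm₂.aestronglyMeasurable ?_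
    filter_upwards [hbound] with ω h
    rw [Real.norm_eq_abs, abs_of_pos (Real.exp_pos _)]
    exact Real.exp_le_one_iff.2 (by linarith [h.1, h.2.1])
  set E₁ : ℝ := ∫ ω', Real.exp (-(A₁ ω')) ∂ℙ with hE₁def
  set E₂ : ℝ := ∫ ω', Real.exp (-(A₂ ω')) ∂ℙ with hE₂def
  have hE₁low : Real.exp (-c) ≤ E₁ := by
    have : (∫ _ω, Real.exp (-c) ∂ℙ) ≤ E₁ := by
      refine integral_mono_ae (integrable_const _) hi₁ ?_
      filter_upwards [hbound] with ω h
      exact Real.exp_le_exp.2 (by linarith [h.2.1, h.2.2])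
    simpa using this
  have hE₂low : Real.exp (-c) ≤ E₂ := by
    have : (∫ _ω, Real.exp (-c) ∂ℙ) ≤ E₂ := by
      refine integral_mono_ae (integrable_const _) hi₂ ?_
      filter_upwards [hbound] with ω h
      exact Real.exp_le_exp.2 (by linarith [h.2.2])
    simpa using this
  have hE₁pos : 0 < E₁ := lt_of_lt_of_le (Real.exp_pos _) hE₁low
  have hE₂pos : 0 < E₂ := lt_of_lt_of_le (Real.exp_pos _) hE₂low
  have hE₂le₁ : E₂ ≤ E₁ := by
    refine integral_mono_ae hi₂ hi₁ ?_
    filter_upwards [hbound] with ω h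
    exact Real.exp_le_exp.2 (by linarith [h.2.1])
  have hE₁le1 : E₁ ≤ 1 := by
    have : E₁ ≤ ∫ _ω, (1 : ℝ) ∂ℙ := by
      refine integral_mono_ae hi₁ (integrable_const _) ?_
      filter_upwards [hbound] with ω h
      exact Real.exp_le_one_iff.2 (by linarith [h.1])
    simpa using this
  have hEdiff : E₁ - E₂ ≤ δ := by
    have h1 : E₁ - E₂ = ∫ ω, (Real.exp (-(A₁ ω)) - Real.exp (-(A₂ ω))) ∂ℙ :=
      (integral_sub hi₁ hi₂).symm
    rw [h1]
    have h2 : (∫ ω, (Real.exp (-(A₁ ω)) - Real.exp (-(A₂ ω))) ∂ℙ) ≤ ∫ _ω, δ ∂ℙ := by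
      refine integral_mono_ae (hi₁.sub hi₂) (integrable_const _) ?_
      filter_upwards [hbound, hδbound] with ω h hδω
      exact le_trans (exp_sub_exp_le h.1 h.2.1) hδω
    simpa using h2
  -- inverse bounds
  have hinv₂ : E₂⁻¹ ≤ Real.exp c := by
    have := inv_anti₀ (Real.exp_pos (-c)) hE₂low
    rwa [Real.exp_neg, inv_inv] at this
  have hinv₁₂ : (E₁ * E₂)⁻¹ ≤ Real.exp (2 * c) := by
    have hprod : Real.exp (-(2 * c)) ≤ E₁ * E₂ := by
      have : Real.exp (-(2 * c)) = Real.exp (-c) * Real.exp (-c) := by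
        rw [← Real.exp_add]; ring_nf
      rw [this]
      exact mul_le_mul hE₁low hE₂low (Real.exp_pos _).le hE₁pos.le
    have := inv_anti₀ (Real.exp_pos (-(2 * c))) hprod
    rwa [Real.exp_neg, inv_inv] at this
  have hexpmono : Real.exp c ≤ Real.exp (2 * c) := Real.exp_le_exp.2 (by linarith)
  -- a.e. pointwise bound for the integrand
  have hg_bound : ∀ᵐ ω ∂ℙ,
      |Real.exp (-(A₂ ω)) / E₂ - Real.exp (-(A₁ ω)) / E₁| ≤ 2 * Real.exp (2 * c) * δ := by
    filter_upwards [hbound, hδbound] with ω h hδω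
    set a := Real.exp (-(A₁ ω)) with hadef
    set b := Real.exp (-(A₂ ω)) with hbdef
    have hbpos : 0 < b := Real.exp_pos _
    have hba : b ≤ a := Real.exp_le_exp.2 (by linarith [h.2.1])
    have ha1 : a ≤ 1 := Real.exp_le_one_iff.2 (by linarith [h.1])
    have habδ : a - b ≤ δ := le_trans (exp_sub_exp_le h.1 h.2.1) hδω
    have hsplit : b / E₂ - a / E₁ = (b - a) / E₂ + a * (E₁ - E₂) / (E₁ * E₂) := by
      field_simp
      ring
    have habs : |b / E₂ - a / E₁| ≤ (a - b) / E₂ + a * (E₁ - E₂) / (E₁ * E₂) := by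
      rw [hsplit]
      refine le_trans (abs_add_le _ _) ?_
      have e1 : |(b - a) / E₂| = (a - b) / E₂ := by
        rw [abs_div, abs_of_pos hE₂pos, abs_sub_comm, abs_of_nonneg (by linarith)]
      have e2 : |a * (E₁ - E₂) / (E₁ * E₂)| = a * (E₁ - E₂) / (E₁ * E₂) := by
        refine abs_of_nonneg ?_
        have : 0 ≤ a * (E₁ - E₂) :=
          mul_nonneg (by positivity) (by linarith)
        positivity
      rw [e1, e2]
    refine le_trans habs ?_
    have t1 : (a - b) / E₂ ≤ δ * Real.exp c := by
      rw [div_eq_mul_inv]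
      exact mul_le_mul habδ hinv₂ (by positivity) hδ
    have t2 : a * (E₁ - E₂) / (E₁ * E₂) ≤ δ * Real.exp (2 * c) := by
      rw [div_eq_mul_inv]
      have h1 : a * (E₁ - E₂) ≤ δ := by
        have := mul_le_mul ha1 hEdiff (by linarith) (by norm_num : (0:ℝ) ≤ 1)
        linarith
      exact mul_le_mul h1 hinv₁₂ (by positivity) hδ
    have t3 : δ * Real.exp c ≤ δ * Real.exp (2 * c) :=
      mul_le_mul_of_nonneg_left hexpmono hδ
    linarith
  have hmeas : Measurable fun ω =>
      |Real.exp (-(A₂ ω)) / E₂ - Real.exp (-(A₁ ω)) / E₁| :=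
    ((hm₂.div_const E₂).sub (hm₁.div_const E₁)).abs
  have hgi : Integrable (fun ω =>
      |Real.exp (-(A₂ ω)) / E₂ - Real.exp (-(A₁ ω)) / E₁|) ℙ := by
    refine (integrable_const (2 * Real.exp (2 * c) * δ)).mono'
      hmeas.aestronglyMeasurable ?_
    filter_upwards [hg_bound] with ω hω
    rwa [Real.norm_eq_abs, abs_abs]
  have hfin : (∫ ω, |Real.exp (-(A₂ ω)) / E₂ - Real.exp (-(A₁ ω)) / E₁| ∂ℙ)
      ≤ ∫ _ω, 2 * Real.exp (2 * c) * δ ∂ℙ :=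
    integral_mono_ae hgi (integrable_const _) hg_bound
  simpa using hfin
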